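/- Let C = (t_1, …, t_N) be a finite list of elements and ≺ an irreflexive and transitive binary relation on them. Consider the randomized fetch algorithm that maintains a window S of pairs (tuple, isDomi-bit), initialized to {(t_1, 0)}; for each subsequent t_i, scanning the current window: for each (t, ·) ∈ S, let Φ₁ = 1 iff t ≺ t_i and Φ₁' = Φ₁ ∧ r for an arbitrary bit r ∈ {0,1} chosen for this comparison; if Φ₁' = 1 then t_i is discarded and its scan stops; otherwise, if t_i ≺ t then (t, ·) is removed from S; if t_i is never discarded, (t_i, isDomi) is inserted into S, where isDomi is the OR of the Φ₁ values computed against window members during t_i's scan. Then for every choice of the bits r, the algorithm terminates with a window S satisfying: {t : (t, 0) ∈ S} = Sky(C) = {p ∈ C : there is no p' ∈ C with p' ≺ p}, and every pair (t, 1) ∈ S has t ∉ Sky(C). In particular, filtering the output by isDomi = 0 yields exactly the skyline, regardless of the random masking bits. -/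

import Mathlib

/-- Scan of the current window during the processing of tuple `t` in the
randomized fetch algorithm `ObliFetch`. `mask` is the stream of arbitrary
masking bits (one consumed per comparison, indexed by the counter `k`) and
`acc` accumulates the OR of the dominance flags `Φ₁` seen so far.
For each window member `(x, b)`: `Φ₁ = 1` iff `x ≺ t`; if the masked flag
`Φ₁ ∧ r` is `1` then `t` is discarded and the scan stops; otherwise `x` is
removed from the window when `t ≺ x`.
Returns `(new window, discarded?, isDomi accumulator, new counter)`. -/
def obliScan {τ : Type*} (r : τ → τ → Prop) [DecidableRel r]
    (mask : ℕ → Bool) (t : τ) :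
    List (τ × Bool) → ℕ → Bool → List (τ × Bool) × Bool × Bool × ℕ
  | [], k, acc => ([], false, acc, k)
  | (x, b) :: rest, k, acc =>
    let Φ₁ : Bool := decide (r x t)
    if Φ₁ && mask k then ((x, b) :: rest, true, acc || Φ₁, k + 1)
    else
      let res := obliScan r mask t rest (k + 1) (acc || Φ₁)
      if decide (r t x) then res
      else ((x, b) :: res.1, res.2.1, res.2.2.1, res.2.2.2)

/-- Main loop of the randomized fetch algorithm: processes the remaining input
tuples one by one, maintaining the window `S` of pairs (tuple, isDomi-bit) and
the masking-bit counter `k`. A never-discarded tuple is inserted with its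
accumulated isDomi bit. -/
def obliFetchGo {τ : Type*} (r : τ → τ → Prop) [DecidableRel r]
    (mask : ℕ → Bool) :
    List τ → List (τ × Bool) → ℕ → List (τ × Bool)
  | [], S, _ => S
  | t :: rest, S, k =>
    let res := obliScan r mask t S k false
    if res.2.1 then obliFetchGo r mask rest res.1 res.2.2.2
    else obliFetchGo r mask rest (res.1 ++ [(t, res.2.2.1)]) res.2.2.2

/-- The randomized fetch algorithm `ObliFetch`: the window is initialized to
`{(t₁, 0)}` and the remaining tuples are processed by `obliFetchGo`. -/
def obliFetch {τ : Type*} (r : τ → τ → Prop) [DecidableRel r]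
    (mask : ℕ → Bool) : List τ → List (τ × Bool)
  | [] => []
  | t :: rest => obliFetchGo r mask rest [(t, false)] 0

section Aux

variable {τ : Type*} (r : τ → τ → Prop) [DecidableRel r] (mask : ℕ → Bool)

lemma scan_sub (t : τ) : ∀ (S : List (τ × Bool)) (k : ℕ) (acc : Bool),
    ∀ p ∈ (obliScan r mask t S k acc).1, p ∈ S := by
  intro S
  induction S with
  | nil => intro k acc p hp; simp [obliScan] at hp
  | cons q rest ih =>
    obtain ⟨x, b⟩ := q
    intro k acc p hp
    simp only [obliScan] at hp
    by_cases h1 : (decide (r x t) && mask k) = true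
    · rw [if_pos h1] at hp; exact hp
    · rw [if_neg h1] at hp
      by_cases h2 : r t x
      · rw [if_pos (decide_eq_true h2)] at hp
        exact List.mem_cons_of_mem _ (ih _ _ _ hp)
      · rw [if_neg (by simp [h2])] at hp
        rcases List.mem_cons.mp hp with h | h
        · exact h ▸ List.mem_cons_self
        · exact List.mem_cons_of_mem _ (ih _ _ _ h)

lemma scan_kept (t : τ) : ∀ (S : List (τ × Bool)) (k : ℕ) (acc : Bool),
    ∀ p ∈ S, ¬ r t p.1 → p ∈ (obliScan r mask t S k acc).1 := by
  intro S
  induction S with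
  | nil => intro k acc p hp; simp at hp
  | cons q rest ih =>
    obtain ⟨x, b⟩ := q
    intro k acc p hp hnr
    simp only [obliScan]
    by_cases h1 : (decide (r x t) && mask k) = true
    · rw [if_pos h1]; exact hp
    · rw [if_neg h1]
      rcases List.mem_cons.mp hp with h | h
      · have hx : ¬ r t x := by subst h; exact hnr
        rw [if_neg (by simp [hx])]
        exact h ▸ List.mem_cons_self
      · by_cases h2 : r t x
        · rw [if_pos (decide_eq_true h2)]
          exact ih _ _ _ h hnr
        · rw [if_neg (by simp [h2])]
          exact List.mem_cons_of_mem _ (ih _ _ _ h hnr)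

lemma scan_true (t : τ) : ∀ (S : List (τ × Bool)) (k : ℕ) (acc : Bool),
    (obliScan r mask t S k acc).2.1 = true → ∃ p ∈ S, r p.1 t := by
  intro S
  induction S with
  | nil => intro k acc h; simp [obliScan] at h
  | cons q rest ih =>
    obtain ⟨x, b⟩ := q
    intro k acc h
    simp only [obliScan] at h
    by_cases h1 : (decide (r x t) && mask k) = true
    · exact ⟨(x, b), List.mem_cons_self, by
        simpa using (Bool.and_elim_left h1)⟩
    · rw [if_neg h1] at h
      by_cases h2 : r t x
      · rw [if_pos (decide_eq_true h2)] at h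
        obtain ⟨p, hp, hr⟩ := ih _ _ h
        exact ⟨p, List.mem_cons_of_mem _ hp, hr⟩
      · rw [if_neg (by simp [h2])] at h
        obtain ⟨p, hp, hr⟩ := ih _ _ h
        exact ⟨p, List.mem_cons_of_mem _ hp, hr⟩

lemma scan_false_drop (t : τ) : ∀ (S : List (τ × Bool)) (k : ℕ) (acc : Bool),
    (obliScan r mask t S k acc).2.1 = false →
    ∀ p ∈ (obliScan r mask t S k acc).1, ¬ r t p.1 := by
  intro S
  induction S with
  | nil => intro k acc _ p hp; simp [obliScan] at hp
  | cons q rest ih =>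
    obtain ⟨x, b⟩ := q
    intro k acc hf p hp
    simp only [obliScan] at hf hp
    by_cases h1 : (decide (r x t) && mask k) = true
    · rw [if_pos h1] at hf; simp at hf
    · rw [if_neg h1] at hf hp
      by_cases h2 : r t x
      · rw [if_pos (decide_eq_true h2)] at hf hp
        exact ih _ _ hf p hp
      · rw [if_neg (by simp [h2])] at hf hp
        rcases List.mem_cons.mp hp with h | h
        · subst h; exact h2
        · exact ih _ _ hf p h

lemma scan_false_acc (t : τ) : ∀ (S : List (τ × Bool)) (k : ℕ) (acc : Bool),
    (obliScan r mask t S k acc).2.1 = false →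
    (obliScan r mask t S k acc).2.2.1 = (acc || S.any (fun p => decide (r p.1 t))) := by
  intro S
  induction S with
  | nil => intro k acc _; simp [obliScan]
  | cons q rest ih =>
    obtain ⟨x, b⟩ := q
    intro k acc hf
    simp only [obliScan] at hf ⊢
    by_cases h1 : (decide (r x t) && mask k) = true
    · rw [if_pos h1] at hf; simp at hf
    · rw [if_neg h1] at hf ⊢
      by_cases h2 : r t x
      · rw [if_pos (decide_eq_true h2)] at hf ⊢
        rw [ih _ _ hf]
        simp [Bool.or_assoc]
      · rw [if_neg (by simp [h2])] at hf ⊢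
        rw [ih _ _ hf]
        simp [Bool.or_assoc]

lemma exists_rmin (hirr : ∀ a, ¬ r a a) (htrans : ∀ a b c, r a b → r b c → r a c) :
    ∀ (P : List τ), P ≠ [] → ∃ m ∈ P, ∀ q ∈ P, ¬ r q m := by
  intro P
  induction P with
  | nil => intro h; exact absurd rfl h
  | cons a P ih =>
    intro _
    rcases eq_or_ne P [] with hP | hP
    · subst hP
      refine ⟨a, List.mem_cons_self, ?_⟩
      intro q hq
      simp only [List.mem_singleton] at hq
      subst hq; exact hirr q
    · obtain ⟨m, hm, hmin⟩ := ih hP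
      by_cases ham : r a m
      · refine ⟨a, List.mem_cons_self, ?_⟩
        intro q hq hqa
        rcases List.mem_cons.mp hq with h | h
        · subst h; exact hirr q hqa
        · exact hmin q h (htrans q a m hqa ham)
      · refine ⟨m, List.mem_cons_of_mem _ hm, ?_⟩
        intro q hq hqm
        rcases List.mem_cons.mp hq with h | h
        · subst h; exact ham hqm
        · exact hmin q h hqm

lemma exists_sky_dom (hirr : ∀ a, ¬ r a a) (htrans : ∀ a b c, r a b → r b c → r a c)
    (P : List τ) (x : τ) (h : ∃ p ∈ P, r p x) :
    ∃ m, (m ∈ P ∧ ¬ ∃ q ∈ P, r q m) ∧ r m x := by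
  obtain ⟨p, hp, hpx⟩ := h
  set D := P.filter (fun p => decide (r p x)) with hD
  have hDne : D ≠ [] := by
    intro hnil
    have : p ∈ D := List.mem_filter.mpr ⟨hp, by simpa using hpx⟩
    simp [hnil] at this
  obtain ⟨m, hm, hmin⟩ := exists_rmin r hirr htrans D hDne
  have hmP : m ∈ P := (List.mem_filter.mp hm).1
  have hmx : r m x := by simpa using (List.mem_filter.mp hm).2
  refine ⟨m, ⟨hmP, ?_⟩, hmx⟩
  rintro ⟨q, hq, hqm⟩
  exact hmin q (List.mem_filter.mpr ⟨hq, by simpa using htrans q m x hqm hmx⟩) hqm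

def GoInv (S : List (τ × Bool)) (P : List τ) : Prop :=
  (∀ p ∈ S, p.1 ∈ P) ∧
  (∀ x, (x, false) ∈ S ↔ (x ∈ P ∧ ¬ ∃ p' ∈ P, r p' x)) ∧
  (∀ x, (x, true) ∈ S → ∃ p' ∈ P, r p' x)

end Aux

section Aux2

variable {τ : Type*} (r : τ → τ → Prop) [DecidableRel r] (mask : ℕ → Bool)

lemma go_inv (hirr : ∀ a, ¬ r a a) (htrans : ∀ a b c, r a b → r b c → r a c) :
    ∀ (rest : List τ) (S : List (τ × Bool)) (k : ℕ) (P : List τ),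
    GoInv r S P → GoInv r (obliFetchGo r mask rest S k) (P ++ rest) := by
  intro rest
  induction rest with
  | nil => intro S k P h; simpa [obliFetchGo] using h
  | cons t rest ih =>
    intro S k P h
    obtain ⟨hsub, hiff, htrue⟩ := h
    have hrw : P ++ t :: rest = (P ++ [t]) ++ rest := by simp
    rw [hrw]
    simp only [obliFetchGo]
    by_cases hd : (obliScan r mask t S k false).2.1 = true
    · rw [if_pos hd]
      apply ih
      obtain ⟨y, hyS, hyr⟩ := scan_true r mask t S k false hd
      refine ⟨?_, ?_, ?_⟩
      · intro p hp
        exact List.mem_append_left _ (hsub p (scan_sub r mask t S k false p hp))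
      · intro x
        constructor
        · intro hx
          have hxS := scan_sub r mask t S k false _ hx
          obtain ⟨hxP, hnd⟩ := (hiff x).mp hxS
          refine ⟨List.mem_append_left _ hxP, ?_⟩
          rintro ⟨p', hp', hrp⟩
          rcases List.mem_append.mp hp' with hmem | hmem
          · exact hnd ⟨p', hmem, hrp⟩
          · simp only [List.mem_singleton] at hmem
            rw [hmem] at hrp
            exact hnd ⟨y.1, hsub y hyS, htrans _ _ _ hyr hrp⟩
        · rintro ⟨hxP, hnd⟩
          rcases List.mem_append.mp hxP with hmem | hmem
          · have hx : (x, false) ∈ S := (hiff x).mpr ⟨hmem, fun ⟨p', hp', hrp⟩ =>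
              hnd ⟨p', List.mem_append_left _ hp', hrp⟩⟩
            apply scan_kept r mask t S k false _ hx
            intro hrt
            exact hnd ⟨t, List.mem_append_right _ (List.mem_singleton_self t), hrt⟩
          · simp only [List.mem_singleton] at hmem
            exact absurd ⟨y.1, List.mem_append_left _ (hsub y hyS),
              by rw [hmem]; exact hyr⟩ hnd
      · intro x hx
        obtain ⟨p', hp', hrp⟩ := htrue x (scan_sub r mask t S k false _ hx)
        exact ⟨p', List.mem_append_left _ hp', hrp⟩
    · rw [if_neg hd]
      have hdf : (obliScan r mask t S k false).2.1 = false := by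
        simpa using hd
      have hacc : (obliScan r mask t S k false).2.2.1
          = S.any (fun p => decide (r p.1 t)) := by
        simpa using scan_false_acc r mask t S k false hdf
      apply ih
      refine ⟨?_, ?_, ?_⟩
      · intro p hp
        rcases List.mem_append.mp hp with hmem | hmem
        · exact List.mem_append_left _ (hsub p (scan_sub r mask t S k false p hmem))
        · simp only [List.mem_singleton] at hmem; subst hmem
          exact List.mem_append_right _ (List.mem_singleton_self t)
      · intro x
        constructor
        · intro hx
          rcases List.mem_append.mp hx with hmem | hmem
          · have hxS := scan_sub r mask t S k false _ hmem
            obtain ⟨hxP, hnd⟩ := (hiff x).mp hxS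
            have hntx : ¬ r t x := scan_false_drop r mask t S k false hdf _ hmem
            refine ⟨List.mem_append_left _ hxP, ?_⟩
            rintro ⟨p', hp', hrp⟩
            rcases List.mem_append.mp hp' with hm | hm
            · exact hnd ⟨p', hm, hrp⟩
            · simp only [List.mem_singleton] at hm
              rw [hm] at hrp; exact hntx hrp
          · simp only [List.mem_singleton, Prod.mk.injEq] at hmem
            obtain ⟨hxt, haccf⟩ := hmem
            have hany : S.any (fun p => decide (r p.1 t)) = false :=
              hacc.symm.trans haccf.symm
            refine ⟨by rw [hxt]; exact List.mem_append_right _ (List.mem_singleton_self t), ?_⟩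
            rintro ⟨p', hp', hrp⟩
            rcases List.mem_append.mp hp' with hm | hm
            · obtain ⟨m, ⟨hmP, hmsky⟩, hmx⟩ :=
                exists_sky_dom r hirr htrans P x ⟨p', hm, hrp⟩
              have hmS : (m, false) ∈ S := (hiff m).mpr ⟨hmP, hmsky⟩
              have hanyT : S.any (fun p => decide (r p.1 t)) = true :=
                List.any_eq_true.mpr ⟨(m, false), hmS, by
                  simp only [decide_eq_true_eq]
                  rw [← hxt]; exact hmx⟩
              rw [hany] at hanyT
              exact absurd hanyT (by simp)
            · simp only [List.mem_singleton] at hm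
              rw [hm, hxt] at hrp
              exact hirr t hrp
        · rintro ⟨hxP, hnd⟩
          rcases List.mem_append.mp hxP with hmem | hmem
          · have hx : (x, false) ∈ S := (hiff x).mpr ⟨hmem, fun ⟨p', hp', hrp⟩ =>
              hnd ⟨p', List.mem_append_left _ hp', hrp⟩⟩
            have hntx : ¬ r t x := fun hrt =>
              hnd ⟨t, List.mem_append_right _ (List.mem_singleton_self t), hrt⟩
            exact List.mem_append_left _ (scan_kept r mask t S k false _ hx hntx)
          · simp only [List.mem_singleton] at hmem
            have hany : S.any (fun p => decide (r p.1 t)) = false := by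
              rw [List.any_eq_false]
              intro p hp
              simp only [decide_eq_true_eq]
              intro hrp
              exact hnd ⟨p.1, List.mem_append_left _ (hsub p hp),
                by rw [hmem]; exact hrp⟩
            rw [hacc, hany, hmem]
            exact List.mem_append_right _ (List.mem_singleton_self _)
      · intro x hx
        rcases List.mem_append.mp hx with hmem | hmem
        · obtain ⟨p', hp', hrp⟩ := htrue x (scan_sub r mask t S k false _ hmem)
          exact ⟨p', List.mem_append_left _ hp', hrp⟩
        · simp only [List.mem_singleton, Prod.mk.injEq] at hmem
          obtain ⟨hxt, haccT⟩ := hmem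
          have hanyT : S.any (fun p => decide (r p.1 t)) = true :=
            hacc.symm.trans haccT.symm
          obtain ⟨p, hp, hrp⟩ := List.any_eq_true.mp hanyT
          refine ⟨p.1, List.mem_append_left _ (hsub p hp), ?_⟩
          rw [hxt]; simpa using hrp

end Aux2

/-- Correctness of the randomized fetch algorithm: for an irreflexive and
transitive dominance relation `≺` and every choice of the masking bits, the
tuples output with flag `isDomi = 0` are exactly the skyline
`Sky(C) = {p ∈ C : ¬∃ p' ∈ C, p' ≺ p}`, and every tuple output with flag
`isDomi = 1` is not in the skyline. -/
theorem obliFetch_correct {τ : Type*} (r : τ → τ → Prop) [DecidableRel r]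
    (hirr : ∀ a, ¬ r a a) (htrans : ∀ a b c, r a b → r b c → r a c)
    (C : List τ) (hC : C ≠ []) (mask : ℕ → Bool) :
    (∀ x, (x, false) ∈ obliFetch r mask C ↔ (x ∈ C ∧ ¬ ∃ p' ∈ C, r p' x)) ∧
    (∀ x, (x, true) ∈ obliFetch r mask C → ¬ (x ∈ C ∧ ¬ ∃ p' ∈ C, r p' x)) := by
  obtain ⟨t, rest, rfl⟩ := List.exists_cons_of_ne_nil hC
  have hinit : GoInv r [(t, false)] [t] := by
    refine ⟨?_, ?_, ?_⟩
    · intro p hp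
      simp only [List.mem_singleton] at hp; subst hp; simp
    · intro x
      constructor
      · intro hx
        simp only [List.mem_singleton, Prod.mk.injEq, and_true] at hx
        subst hx
        refine ⟨List.mem_singleton_self _, ?_⟩
        rintro ⟨p', hp', hr⟩
        simp only [List.mem_singleton] at hp'
        subst hp'; exact hirr _ hr
      · rintro ⟨hx, -⟩
        simp only [List.mem_singleton] at hx
        subst hx
        exact List.mem_singleton_self _
    · intro x hx
      simp at hx
  have h := go_inv r mask hirr htrans rest [(t, false)] 0 [t] hinit
  simp only [List.singleton_append] at h
  obtain ⟨-, hiff, htrue⟩ := h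
  simp only [obliFetch]
  exact ⟨hiff, fun x hx hmem => hmem.2 (htrue x hx)⟩
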